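/- (Lemma 1(b)) Let φ be the standard normal density and Φ the standard normal cdf. Fix ν > 0. Then the function z ↦ R(z,ν) = (φ(z−ν)·Φ(z+ν) − φ(z+ν)·Φ(z−ν)) / (φ(z+ν) − φ(z−ν)) is strictly monotonically increasing on (−∞, −ν/2); equivalently, for fixed ν the strangle's relative value R(δ,ν) is strictly increasing in δ on the practical domain ℬ. -/

import Mathlib

open MeasureTheory Real

/-- The standard normal density φ(u) = exp(-u²/2)/√(2π). -/
noncomputable def stdNormalPdf (u : ℝ) : ℝ := Real.exp (-u ^ 2 / 2) / Real.sqrt (2 * Real.pi)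

/-- The standard normal cdf Φ(z) = ∫_{-∞}^z φ(u) du. -/
noncomputable def stdNormalCdf (z : ℝ) : ℝ := ∫ u in Set.Iic z, stdNormalPdf u

lemma stdNormalPdf_pos (u : ℝ) : 0 < stdNormalPdf u := by
  unfold stdNormalPdf
  positivity

lemma stdNormalPdf_eq (u : ℝ) :
    stdNormalPdf u = Real.exp (-(1/2) * u ^ 2) / Real.sqrt (2 * Real.pi) := by
  unfold stdNormalPdf; ring_nf

lemma integrable_stdNormalPdf : Integrable stdNormalPdf := by
  have h := integrable_exp_neg_mul_sq (b := (1/2 : ℝ)) (by norm_num)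
  have := h.div_const (Real.sqrt (2 * Real.pi))
  refine this.congr ?_
  filter_upwards with u
  rw [stdNormalPdf_eq]

lemma continuous_stdNormalPdf : Continuous stdNormalPdf := by
  unfold stdNormalPdf
  continuity

lemma hasDerivAt_stdNormalPdf (u : ℝ) :
    HasDerivAt stdNormalPdf (-u * stdNormalPdf u) u := by
  have h1 : HasDerivAt (fun u : ℝ => -u ^ 2 / 2) (-u) u := by
    have := ((hasDerivAt_pow 2 u).neg).div_const 2
    simpa using this.congr_deriv (by ring)
  have h2 : HasDerivAt (fun u : ℝ => Real.exp (-u ^ 2 / 2))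
      (Real.exp (-u ^ 2 / 2) * (-u)) u := h1.exp
  have h3 := h2.div_const (Real.sqrt (2 * Real.pi))
  unfold stdNormalPdf
  refine h3.congr_deriv ?_
  ring

lemma hasDerivAt_stdNormalCdf (z : ℝ) :
    HasDerivAt stdNormalCdf (stdNormalPdf z) z := by
  have hkey : ∀ x : ℝ, stdNormalCdf x = stdNormalCdf 0 + ∫ u in (0:ℝ)..x, stdNormalPdf u := by
    intro x
    have := intervalIntegral.integral_Iic_sub_Iic (μ := volume) (f := stdNormalPdf) (a := (0:ℝ)) (b := x)
      integrable_stdNormalPdf.integrableOn integrable_stdNormalPdf.integrableOn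
    unfold stdNormalCdf
    linarith [this]
  have hd : HasDerivAt (fun x => ∫ u in (0:ℝ)..x, stdNormalPdf u) (stdNormalPdf z) z := by
    refine intervalIntegral.integral_hasDerivAt_right
      (integrable_stdNormalPdf.intervalIntegrable)
      (continuous_stdNormalPdf.aestronglyMeasurable.stronglyMeasurableAtFilter)
      continuous_stdNormalPdf.continuousAt
  have := (hd.const_add (stdNormalCdf 0))
  exact this.congr_of_eventuallyEq (Filter.Eventually.of_forall fun x => hkey x)

lemma stdNormalCdf_strictMono : StrictMono stdNormalCdf := by
  intro a b hab
  unfold stdNormalCdf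
  have hsub : (∫ u in Set.Iic b, stdNormalPdf u) - ∫ u in Set.Iic a, stdNormalPdf u
      = ∫ u in Set.Ioc a b, stdNormalPdf u := by
    rw [intervalIntegral.integral_Iic_sub_Iic integrable_stdNormalPdf.integrableOn
      integrable_stdNormalPdf.integrableOn, intervalIntegral.integral_of_le hab.le]
  have hpos : 0 < ∫ u in Set.Ioc a b, stdNormalPdf u := by
    refine setIntegral_pos_iff_support_of_nonneg_ae ?_ ?_ |>.2 ?_
    · filter_upwards with u using (stdNormalPdf_pos u).le
    · exact integrable_stdNormalPdf.integrableOn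
    · have : Function.support stdNormalPdf = Set.univ := by
        ext u; simp [(stdNormalPdf_pos u).ne']
      rw [this, Set.univ_inter]
      simpa using hab
  linarith

/-- Lemma 1(b): for fixed ν > 0, the relative value
R(z,ν) = (φ(z−ν)Φ(z+ν) − φ(z+ν)Φ(z−ν))/(φ(z+ν) − φ(z−ν)) is strictly increasing
in z on (−∞, −ν/2). -/
theorem strangle_relative_value_strictMonoOn_z (ν : ℝ) (hν : 0 < ν) :
    StrictMonoOn
      (fun z : ℝ =>
        (stdNormalPdf (z - ν) * stdNormalCdf (z + ν) -
            stdNormalPdf (z + ν) * stdNormalCdf (z - ν)) /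
          (stdNormalPdf (z + ν) - stdNormalPdf (z - ν)))
      (Set.Iio (-ν / 2)) := by
  have hD : ∀ z : ℝ, z < 0 → stdNormalPdf (z - ν) < stdNormalPdf (z + ν) := by
    intro z hz
    unfold stdNormalPdf
    have h2π : 0 < Real.sqrt (2 * Real.pi) := Real.sqrt_pos.2 (by positivity)
    have hexp : Real.exp (-(z - ν) ^ 2 / 2) < Real.exp (-(z + ν) ^ 2 / 2) :=
      Real.exp_lt_exp.2 (by nlinarith)
    exact div_lt_div_of_pos_right hexp h2π
  -- derivative building blocks
  have hp : ∀ z : ℝ, HasDerivAt (fun z => stdNormalPdf (z + ν))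
      (-(z + ν) * stdNormalPdf (z + ν)) z := by
    intro z
    have := (hasDerivAt_stdNormalPdf (z + ν)).comp z ((hasDerivAt_id z).add_const ν)
    simpa [Function.comp_def] using this
  have hq : ∀ z : ℝ, HasDerivAt (fun z => stdNormalPdf (z - ν))
      (-(z - ν) * stdNormalPdf (z - ν)) z := by
    intro z
    have := (hasDerivAt_stdNormalPdf (z - ν)).comp z ((hasDerivAt_id z).sub_const ν)
    simpa [Function.comp_def] using this
  have hP : ∀ z : ℝ, HasDerivAt (fun z => stdNormalCdf (z + ν)) (stdNormalPdf (z + ν)) z := by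
    intro z
    have := (hasDerivAt_stdNormalCdf (z + ν)).comp z ((hasDerivAt_id z).add_const ν)
    simpa [Function.comp_def] using this
  have hQ : ∀ z : ℝ, HasDerivAt (fun z => stdNormalCdf (z - ν)) (stdNormalPdf (z - ν)) z := by
    intro z
    have := (hasDerivAt_stdNormalCdf (z - ν)).comp z ((hasDerivAt_id z).sub_const ν)
    simpa [Function.comp_def] using this
  -- derivative of f at points z < 0
  have hderiv : ∀ z : ℝ, z < 0 →
      HasDerivAt (fun z : ℝ =>
        (stdNormalPdf (z - ν) * stdNormalCdf (z + ν) -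
            stdNormalPdf (z + ν) * stdNormalCdf (z - ν)) /
          (stdNormalPdf (z + ν) - stdNormalPdf (z - ν)))
      (((-(z - ν) * stdNormalPdf (z - ν) * stdNormalCdf (z + ν) +
            stdNormalPdf (z - ν) * stdNormalPdf (z + ν) -
            (-(z + ν) * stdNormalPdf (z + ν) * stdNormalCdf (z - ν) +
              stdNormalPdf (z + ν) * stdNormalPdf (z - ν))) *
          (stdNormalPdf (z + ν) - stdNormalPdf (z - ν)) -
        (stdNormalPdf (z - ν) * stdNormalCdf (z + ν) -
            stdNormalPdf (z + ν) * stdNormalCdf (z - ν)) *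
          (-(z + ν) * stdNormalPdf (z + ν) - -(z - ν) * stdNormalPdf (z - ν))) /
        (stdNormalPdf (z + ν) - stdNormalPdf (z - ν)) ^ 2) z := by
    intro z hz
    have hNum : HasDerivAt (fun z : ℝ =>
        stdNormalPdf (z - ν) * stdNormalCdf (z + ν) -
          stdNormalPdf (z + ν) * stdNormalCdf (z - ν))
        (-(z - ν) * stdNormalPdf (z - ν) * stdNormalCdf (z + ν) +
            stdNormalPdf (z - ν) * stdNormalPdf (z + ν) -
            (-(z + ν) * stdNormalPdf (z + ν) * stdNormalCdf (z - ν) +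
              stdNormalPdf (z + ν) * stdNormalPdf (z - ν))) z :=
      ((hq z).mul (hP z)).sub ((hp z).mul (hQ z))
    have hDen : HasDerivAt (fun z : ℝ => stdNormalPdf (z + ν) - stdNormalPdf (z - ν))
        (-(z + ν) * stdNormalPdf (z + ν) - -(z - ν) * stdNormalPdf (z - ν)) z :=
      (hp z).sub (hq z)
    exact hNum.div hDen (sub_ne_zero.2 (hD z hz).ne')
  -- the derivative is positive for z < 0
  have hpos : ∀ z : ℝ, z < 0 →
      0 < ((-(z - ν) * stdNormalPdf (z - ν) * stdNormalCdf (z + ν) +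
            stdNormalPdf (z - ν) * stdNormalPdf (z + ν) -
            (-(z + ν) * stdNormalPdf (z + ν) * stdNormalCdf (z - ν) +
              stdNormalPdf (z + ν) * stdNormalPdf (z - ν))) *
          (stdNormalPdf (z + ν) - stdNormalPdf (z - ν)) -
        (stdNormalPdf (z - ν) * stdNormalCdf (z + ν) -
            stdNormalPdf (z + ν) * stdNormalCdf (z - ν)) *
          (-(z + ν) * stdNormalPdf (z + ν) - -(z - ν) * stdNormalPdf (z - ν))) /
        (stdNormalPdf (z + ν) - stdNormalPdf (z - ν)) ^ 2 := by
    intro z hz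
    have hDz := hD z hz
    have hPQ : stdNormalCdf (z - ν) < stdNormalCdf (z + ν) :=
      stdNormalCdf_strictMono (by linarith)
    have hp0 := stdNormalPdf_pos (z + ν)
    have hq0 := stdNormalPdf_pos (z - ν)
    apply div_pos
    · have key : (-(z - ν) * stdNormalPdf (z - ν) * stdNormalCdf (z + ν) +
            stdNormalPdf (z - ν) * stdNormalPdf (z + ν) -
            (-(z + ν) * stdNormalPdf (z + ν) * stdNormalCdf (z - ν) +
              stdNormalPdf (z + ν) * stdNormalPdf (z - ν))) *
          (stdNormalPdf (z + ν) - stdNormalPdf (z - ν)) -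
        (stdNormalPdf (z - ν) * stdNormalCdf (z + ν) -
            stdNormalPdf (z + ν) * stdNormalCdf (z - ν)) *
          (-(z + ν) * stdNormalPdf (z + ν) - -(z - ν) * stdNormalPdf (z - ν)) =
          2 * ν * stdNormalPdf (z + ν) * stdNormalPdf (z - ν) *
            (stdNormalCdf (z + ν) - stdNormalCdf (z - ν)) := by ring
      rw [key]
      have : 0 < stdNormalCdf (z + ν) - stdNormalCdf (z - ν) := by linarith
      positivity
    · have : stdNormalPdf (z + ν) - stdNormalPdf (z - ν) ≠ 0 :=
        sub_ne_zero.2 hDz.ne'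
      positivity
  -- conclude via the mean value theorem
  apply strictMonoOn_of_deriv_pos (convex_Iio _)
  · intro z hz
    have hz0 : z < 0 := lt_of_lt_of_le hz (by linarith)
    exact ((hderiv z hz0).continuousAt).continuousWithinAt
  · intro z hz
    rw [interior_Iio] at hz
    have hz0 : z < 0 := lt_of_lt_of_le hz (by linarith)
    rw [(hderiv z hz0).deriv]
    exact hpos z hz0
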